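/- If C is a linear [n,k;q] code with minimum distance at least 2 and A_C(z_0) = (1/q)[(1+(q-1)z_0)^{k+1} + (q-1)(1-z_0)^{k+1}] for some z_0 ∈ (0,1), then for all i with 0 ≤ i ≤ n, A_i(C) = A_i(E_{n,k,v}), where v ∈ F_q^k is any vector of full support and E_{n,k,v} is the code {(x, x·v, 0, ..., 0) : x ∈ F_q^k} ⊆ F_q^n. -/

import Mathlib

open scoped Classical

/-- Weight distribution function `A_C(z) = Σ_{c ∈ C} z^{wt(c)}`. -/
noncomputable def weightEnum {F : Type*} [Field F] [Fintype F] {n : ℕ}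
    (C : Submodule F (Fin n → F)) (z : ℝ) : ℝ :=
  ∑ c : C, z ^ hammingNorm (c : Fin n → F)

/-- Number of codewords of Hamming weight `i`: the weight distribution `A_i(C)`. -/
noncomputable def weightCount {F : Type*} [Field F] [Fintype F] {n : ℕ}
    (C : Submodule F (Fin n → F)) (i : ℕ) : ℕ :=
  (Finset.univ.filter (fun c : C => hammingNorm (c : Fin n → F) = i)).card

/-- The linear map `x ↦ (x, x·v, 0, ..., 0)`. -/
noncomputable def Emap (F : Type*) [Field F] (n k : ℕ) (v : Fin k → F) :
    (Fin k → F) →ₗ[F] (Fin n → F) where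
  toFun x := fun i =>
    if h : (i : ℕ) < k then x ⟨i, h⟩
    else if (i : ℕ) = k then ∑ j, x j * v j else 0
  map_add' x y := by
    funext i
    by_cases h : (i : ℕ) < k
    · simp [h]
    · by_cases h2 : (i : ℕ) = k <;> simp [h, h2, add_mul, Finset.sum_add_distrib]
  map_smul' t x := by
    funext i
    by_cases h : (i : ℕ) < k
    · simp [h]
    · by_cases h2 : (i : ℕ) = k <;> simp [h, h2, Finset.mul_sum, mul_assoc]

/-- The code `E_{n,k,v} = {(x, x·v, 0, ..., 0) : x ∈ F_q^k}`. -/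
noncomputable def Ecode (F : Type*) [Field F] (n k : ℕ) (v : Fin k → F) :
    Submodule F (Fin n → F) :=
  LinearMap.range (Emap F n k v)


-- ===================== auxiliary machinery =====================

open Finset

set_option linter.unusedSectionVars false
set_option linter.unnecessarySimpa false
set_option maxHeartbeats 1000000
set_option synthInstance.maxHeartbeats 400000

/-- The extremal bound `(1/q)((1+(q-1)z)^(t+1) + (q-1)(1-z)^(t+1))`. -/
noncomputable def KB (F : Type*) [Field F] [Fintype F] (z : ℝ) (t : ℕ) : ℝ :=
  (1 / (Fintype.card F : ℝ)) * ((1 + ((Fintype.card F : ℝ) - 1) * z) ^ (t + 1)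
    + ((Fintype.card F : ℝ) - 1) * (1 - z) ^ (t + 1))

/-- The weight distribution of the extremal code, described concretely. -/
noncomputable def eCnt (F : Type*) [Field F] [Fintype F] (t i : ℕ) : ℕ :=
  (univ.filter fun x : Fin t → F =>
    hammingNorm x + (if (∑ j, x j) = 0 then 0 else 1) = i).card

/-- Vectors vanishing off the range of `ι`. -/
def Zsub (t m : ℕ) (ι : Fin t → Fin m) (F : Type*) [Field F] : Submodule F (Fin m → F) where
  carrier := {v | ∀ i, i ∉ Set.range ι → v i = 0}
  add_mem' := by intro a b ha hb i hi; simp [ha i hi, hb i hi]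
  zero_mem' := by intro i hi; rfl
  smul_mem' := by intro r a ha i hi; simp [ha i hi]

section Aux

variable {F : Type*} [Field F] [Fintype F]

lemma hammingNorm_eq_sum {m : ℕ} (x : Fin m → F) :
    hammingNorm x = ∑ i, if x i = 0 then 0 else 1 := by
  rw [hammingNorm, Finset.card_filter]
  exact Finset.sum_congr rfl fun i _ => by by_cases h : x i = 0 <;> simp [h]

lemma norm_cons {t : ℕ} (a : F) (y : Fin t → F) :
    hammingNorm (Fin.cons a y : Fin (t+1) → F) = (if a = 0 then 0 else 1) + hammingNorm y := by
  rw [hammingNorm_eq_sum (Fin.cons a y : Fin (t+1) → F), hammingNorm_eq_sum y, Fin.sum_univ_succ]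
  simp [Fin.cons_zero, Fin.cons_succ]

lemma sum_pi_succ {t : ℕ} (g : (Fin (t + 1) → F) → ℝ) :
    ∑ x, g x = ∑ a : F, ∑ y : Fin t → F, g (Fin.cons a y) := by
  rw [← (Fin.consEquiv fun _ : Fin (t+1) => F).sum_comp g]
  rw [Fintype.sum_prod_type]
  rfl

lemma sum_ind_F (z : ℝ) :
    ∑ a : F, (if a = 0 then 1 else z) = 1 + ((Fintype.card F : ℝ) - 1) * z := by
  rw [Finset.sum_ite, Finset.sum_const, Finset.sum_const]
  have h1 : (univ.filter fun a : F => a = 0) = {0} := by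
    ext a; simp
  have h2 : (univ.filter fun a : F => ¬ a = 0) = univ.erase 0 := by
    ext a; simp [Finset.mem_erase]
  rw [h1, h2, Finset.card_erase_of_mem (mem_univ _), Finset.card_singleton,
    Finset.card_univ, nsmul_eq_mul, nsmul_eq_mul,
    Nat.cast_sub (Fintype.card_pos : (1:ℕ) ≤ Fintype.card F)]
  push_cast
  ring

lemma sum_pow_norm (z : ℝ) : ∀ t : ℕ,
    ∑ x : Fin t → F, z ^ hammingNorm x = (1 + ((Fintype.card F : ℝ) - 1) * z) ^ t := by
  intro t
  induction t with
  | zero => simp [hammingNorm]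
  | succ t ih =>
    rw [sum_pi_succ (fun x => z ^ hammingNorm x)]
    have : ∀ a : F, ∑ y : Fin t → F, z ^ hammingNorm (Fin.cons a y : Fin (t+1) → F)
        = (if a = 0 then 1 else z) * (1 + ((Fintype.card F : ℝ) - 1) * z) ^ t := by
      intro a
      rw [← ih, Finset.mul_sum]
      refine Finset.sum_congr rfl fun y _ => ?_
      rw [norm_cons, pow_add]
      by_cases h : a = 0 <;> simp [h]
    rw [Finset.sum_congr rfl fun a _ => this a, ← Finset.sum_mul, sum_ind_F, pow_succ]
    ring


-- split lemma (uses sum_pow_norm proved before)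
lemma sum_pow_ind (z : ℝ) {t : ℕ} (p : (Fin t → F) → Prop) :
    ∑ x : Fin t → F, z ^ (hammingNorm x + if p x then 0 else 1)
      = z * (∑ x : Fin t → F, z ^ hammingNorm x)
        + (1 - z) * ∑ x ∈ univ.filter p, z ^ hammingNorm x := by
  rw [← Finset.sum_filter_add_sum_filter_not univ p
    (fun x => z ^ (hammingNorm x + if p x then 0 else 1))]
  have h1 : ∑ x ∈ univ.filter p, z ^ (hammingNorm x + if p x then 0 else 1)
      = ∑ x ∈ univ.filter p, z ^ hammingNorm x := by
    refine Finset.sum_congr rfl fun x hx => ?_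
    rw [if_pos (Finset.mem_filter.mp hx).2, Nat.add_zero]
  have h2 : ∑ x ∈ univ.filter (fun x => ¬ p x), z ^ (hammingNorm x + if p x then 0 else 1)
      = ∑ x ∈ univ.filter (fun x => ¬ p x), z * z ^ hammingNorm x := by
    refine Finset.sum_congr rfl fun x hx => ?_
    rw [if_neg (Finset.mem_filter.mp hx).2, pow_succ]; ring
  rw [h1, h2, ← Finset.mul_sum]
  have h3 : ∑ x ∈ univ.filter (fun x => ¬ p x), z ^ hammingNorm x
      = (∑ x : Fin t → F, z ^ hammingNorm x) - ∑ x ∈ univ.filter p, z ^ hammingNorm x := by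
    rw [← Finset.sum_filter_add_sum_filter_not univ p (fun x => z ^ hammingNorm x)]; ring
  rw [h3]; ring


lemma KB_lt {z : ℝ} (hz0 : 0 < z) (hz1 : z < 1) (t : ℕ) : KB F z t < KB F z (t + 1) := by
  have hq2 : (2:ℝ) ≤ (Fintype.card F : ℝ) := by exact_mod_cast Fintype.one_lt_card
  have hq0 : (0:ℝ) < (Fintype.card F : ℝ) := by linarith
  have hW : (0:ℝ) ≤ 1 - z := by linarith
  have hPW : 1 - z < 1 + ((Fintype.card F : ℝ) - 1) * z := by nlinarith
  have hpow : (1 - z) ^ (t+1) < (1 + ((Fintype.card F : ℝ) - 1) * z) ^ (t+1) :=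
    pow_lt_pow_left₀ hPW hW (Nat.succ_ne_zero t)
  have hdiff : KB F z (t+1) - KB F z t
      = (((Fintype.card F : ℝ) - 1) * z / (Fintype.card F : ℝ))
        * ((1 + ((Fintype.card F : ℝ) - 1) * z) ^ (t+1) - (1 - z) ^ (t+1)) := by
    unfold KB; field_simp; ring
  have hpos : 0 < (((Fintype.card F : ℝ) - 1) * z / (Fintype.card F : ℝ))
        * ((1 + ((Fintype.card F : ℝ) - 1) * z) ^ (t+1) - (1 - z) ^ (t+1)) := by
    apply mul_pos
    · apply div_pos (mul_pos (by linarith) hz0) hq0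
    · linarith
  linarith

lemma KB_le {z : ℝ} (hz0 : 0 < z) (hz1 : z < 1) {s t : ℕ} (h : s ≤ t) : KB F z s ≤ KB F z t :=
  (strictMono_nat_of_lt_succ (KB_lt hz0 hz1)).monotone h

lemma KB_lt_of_lt {z : ℝ} (hz0 : 0 < z) (hz1 : z < 1) {s t : ℕ} (h : s < t) :
    KB F z s < KB F z t :=
  (strictMono_nat_of_lt_succ (KB_lt hz0 hz1)) h


lemma KB_zero (z : ℝ) : KB F z 0 = 1 := by
  have hq0 : (0:ℝ) < (Fintype.card F : ℝ) := by exact_mod_cast Fintype.card_pos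
  rw [KB]
  field_simp
  ring

lemma KB_step (z : ℝ) (s : ℕ) :
    z * (1 + ((Fintype.card F : ℝ) - 1) * z) ^ (s + 1) + (1 - z) * KB F z s
      = KB F z (s + 1) := by
  have hq0 : (0:ℝ) < (Fintype.card F : ℝ) := by exact_mod_cast Fintype.card_pos
  rw [KB, KB]
  field_simp
  ring

lemma szero_cnt (s i : ℕ) :
    ((univ : Finset (Fin (s+1) → F)).filter
      fun x => (∑ j, x j) = 0 ∧ hammingNorm x = i).card = eCnt F s i := by
  rw [eCnt]
  symm
  apply Finset.card_bij (fun (y : Fin s → F) _ => (Fin.cons (-∑ j, y j) y : Fin (s+1) → F))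
  · intro y hy
    rw [Finset.mem_filter] at *
    refine ⟨Finset.mem_univ _, ?_, ?_⟩
    · rw [Fin.sum_cons]; ring
    · rw [norm_cons, neg_eq_zero]
      have := hy.2
      by_cases h : (∑ j, y j) = 0 <;> simp [h] at this ⊢ <;> omega
  · intro a ha b hb hab
    have := congrArg Fin.tail hab
    simpa [Fin.tail_cons] using this
  · intro x hx
    rw [Finset.mem_filter] at hx
    obtain ⟨-, hsum, hnorm⟩ := hx
    have hx0 : x 0 = -∑ j, Fin.tail x j := by
      apply eq_neg_of_add_eq_zero_left
      rw [← Fin.sum_cons (x 0) (Fin.tail x), Fin.cons_self_tail]; exact hsum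
    have hxc : (Fin.cons (x 0) (Fin.tail x) : Fin (s+1) → F) = x := Fin.cons_self_tail x
    have hnorm2 : (if x 0 = 0 then 0 else 1) + hammingNorm (Fin.tail x) = i := by
      rw [← norm_cons (x 0) (Fin.tail x), hxc]; exact hnorm
    refine ⟨Fin.tail x, ?_, ?_⟩
    · rw [Finset.mem_filter]
      refine ⟨Finset.mem_univ _, ?_⟩
      by_cases h : (∑ j, Fin.tail x j) = 0
      · have : x 0 = 0 := by rw [hx0, h, neg_zero]
        rw [if_pos this] at hnorm2
        simp [h]
        omega
      · have : x 0 ≠ 0 := by rw [hx0, neg_ne_zero]; exact h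
        rw [if_neg this] at hnorm2
        simp [h]
        omega
    · rw [← hx0]
      exact hxc


lemma exists_info_set : ∀ t m : ℕ, ∀ D : Submodule F (Fin m → F), Module.finrank F D = t →
    ∃ ι : Fin t → Fin m, Function.Injective ι ∧
      (∀ c ∈ D, (∀ j, c (ι j) = 0) → c = 0) ∧
      (∀ j, ∃ c ∈ D, c (ι j) ≠ 0) := by
  intro t
  induction t with
  | zero =>
    intro m D hD
    refine ⟨Fin.elim0, fun a => a.elim0, fun c hc _ => ?_, fun j => j.elim0⟩
    have : D = ⊥ := Submodule.finrank_eq_zero.mp hD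
    simpa [this] using hc
  | succ s ih =>
    intro m D hD
    -- D ≠ ⊥
    have hpos : 0 < Module.finrank F D := by omega
    have hnt : Nontrivial D := Module.finrank_pos_iff.mp hpos
    obtain ⟨⟨d, hd⟩, hd0⟩ := exists_ne (0 : D)
    have hdne : d ≠ 0 := by
      intro h; apply hd0; ext; simp [h]
    obtain ⟨i, hdi⟩ : ∃ i, d i ≠ 0 := by
      by_contra h; push_neg at h; exact hdne (funext h)
    set D₀ : Submodule F (Fin m → F) := D ⊓ LinearMap.ker (LinearMap.proj i) with hD₀def
    have hD₀le : D₀ ≤ D := inf_le_left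
    -- finrank D₀ = s
    set f : D →ₗ[F] F := (LinearMap.proj i).comp D.subtype with hfdef
    have hker : LinearMap.ker f = Submodule.comap D.subtype D₀ := by
      rw [hfdef, LinearMap.ker_comp, hD₀def, Submodule.comap_inf]
      rw [Submodule.comap_subtype_self, top_inf_eq]
    have hrange : LinearMap.range f ≠ ⊥ := by
      intro h
      have : f ⟨d, hd⟩ = 0 := by
        rw [← LinearMap.mem_ker, LinearMap.ker_eq_top.mpr ?_]; trivial
        rwa [← LinearMap.range_eq_bot] at *
        
      exact hdi this
    have hrank1 : Module.finrank F (LinearMap.range f) = 1 := by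
      have h1 : Module.finrank F (LinearMap.range f) ≤ 1 := by
        simpa using Submodule.finrank_le (LinearMap.range f)
      have h2 : Module.finrank F (LinearMap.range f) ≠ 0 := by
        rw [Ne, Submodule.finrank_eq_zero]; exact hrange
      omega
    have hfr : Module.finrank F D₀ = s := by
      have := LinearMap.finrank_range_add_finrank_ker f
      rw [hrank1, hD, hker] at this
      have heq : Module.finrank F (Submodule.comap D.subtype D₀) = Module.finrank F D₀ :=
        (Submodule.comapSubtypeEquivOfLe hD₀le).finrank_eq
      omega
    obtain ⟨ι₀, hι₀inj, hι₀sep, hι₀supp⟩ := ih m D₀ hfr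
    have hι₀ne : ∀ j, ι₀ j ≠ i := by
      intro j hji
      obtain ⟨c, hc, hcne⟩ := hι₀supp j
      apply hcne
      have h2 : c i = 0 := by simpa using hc.2
      rw [hji]
      exact h2
    refine ⟨Fin.cons i ι₀, ?_, ?_, ?_⟩
    · intro a b hab
      induction a using Fin.cases with
      | zero =>
        induction b using Fin.cases with
        | zero => rfl
        | succ b' => rw [Fin.cons_zero, Fin.cons_succ] at hab; exact absurd hab.symm (hι₀ne b')
      | succ a' =>
        induction b using Fin.cases with
        | zero => rw [Fin.cons_zero, Fin.cons_succ] at hab; exact absurd hab (hι₀ne a')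
        | succ b' =>
          rw [Fin.cons_succ, Fin.cons_succ] at hab
          exact congrArg Fin.succ (hι₀inj hab)
    · intro c hc hzero
      have hci : c i = 0 := by simpa using hzero 0
      have hcD₀ : c ∈ D₀ := by
        refine ⟨hc, ?_⟩
        rw [SetLike.mem_coe, LinearMap.mem_ker]
        simpa using hci
      refine hι₀sep c hcD₀ fun j => ?_
      simpa using hzero j.succ
    · intro j
      induction j using Fin.cases with
      | zero => exact ⟨d, hd, by simpa using hdi⟩
      | succ j' =>
        obtain ⟨c, hc, hcne⟩ := hι₀supp j'
        exact ⟨c, hD₀le hc, by simpa using hcne⟩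


lemma norm_comp_le {t m : ℕ} {ι : Fin t → Fin m} (hι : Function.Injective ι) (c : Fin m → F) :
    hammingNorm (c ∘ ι) ≤ hammingNorm c := by
  apply Finset.card_le_card_of_injOn ι
  · intro j hj
    simp only [hammingNorm, Finset.mem_coe, Finset.mem_filter, Finset.mem_univ, true_and] at *
    exact hj
  · exact hι.injOn

lemma norm_comp_add_one_le {t m : ℕ} {ι : Fin t → Fin m} (hι : Function.Injective ι)
    (c : Fin m → F) {i : Fin m} (hi : i ∉ Set.range ι) (hci : c i ≠ 0) :
    hammingNorm (c ∘ ι) + 1 ≤ hammingNorm c := by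
  classical
  have himg : insert i (Finset.image ι (univ.filter fun j => c (ι j) ≠ 0))
      ⊆ univ.filter (fun i' => c i' ≠ 0) := by
    intro a ha
    rcases Finset.mem_insert.mp ha with rfl | ha
    · simp [hci]
    · obtain ⟨j, hj, rfl⟩ := Finset.mem_image.mp ha
      simpa using (Finset.mem_filter.mp hj).2
  have hnotmem : i ∉ Finset.image ι (univ.filter fun j => c (ι j) ≠ 0) := by
    intro h
    obtain ⟨j, _, hj⟩ := Finset.mem_image.mp h
    exact hi ⟨j, hj⟩
  calc hammingNorm (c ∘ ι) + 1
      = (Finset.image ι (univ.filter fun j => c (ι j) ≠ 0)).card + 1 := by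
        rw [Finset.card_image_of_injective _ hι]; rfl
    _ = (insert i (Finset.image ι (univ.filter fun j => c (ι j) ≠ 0))).card := by
        rw [Finset.card_insert_of_notMem hnotmem]
    _ ≤ hammingNorm c := Finset.card_le_card himg

lemma norm_comp_eq {t m : ℕ} {ι : Fin t → Fin m} (hι : Function.Injective ι)
    (c : Fin m → F) (hz : ∀ i, i ∉ Set.range ι → c i = 0) :
    hammingNorm (c ∘ ι) = hammingNorm c := by
  apply Finset.card_bij (fun j _ => ι j)
  · intro j hj
    simp only [hammingNorm, Finset.mem_filter, Finset.mem_univ, true_and] at *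
    exact hj
  · intro a ha b hb hab
    exact hι hab
  · intro i' hi'
    have hci' : c i' ≠ 0 := by simpa [hammingNorm] using hi'
    have : i' ∈ Set.range ι := by
      by_contra h
      exact hci' (hz i' h)
    obtain ⟨j, rfl⟩ := this
    exact ⟨j, by simpa [hammingNorm, Function.comp] using hci', rfl⟩



-- count split lemma
lemma cnt_split {t : ℕ} (p : (Fin t → F) → Prop) (i : ℕ) :
    (univ.filter fun x : Fin t → F => hammingNorm x + (if p x then 0 else 1) = i).card
      + (univ.filter fun x : Fin t → F => p x ∧ hammingNorm x + 1 = i).card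
    = (univ.filter fun x : Fin t → F => p x ∧ hammingNorm x = i).card
      + (univ.filter fun x : Fin t → F => hammingNorm x + 1 = i).card := by
  rw [Finset.card_filter, Finset.card_filter, Finset.card_filter, Finset.card_filter,
    ← Finset.sum_add_distrib, ← Finset.sum_add_distrib]
  refine Finset.sum_congr rfl fun x _ => ?_
  by_cases h : p x <;> simp [h]

lemma cnt_transfer {t : ℕ} (p p' : (Fin t → F) → Prop)
    (h : ∀ j, (univ.filter fun x : Fin t → F => p x ∧ hammingNorm x = j).card
      = (univ.filter fun x : Fin t → F => p' x ∧ hammingNorm x = j).card) (i : ℕ) :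
    (univ.filter fun x : Fin t → F => hammingNorm x + (if p x then 0 else 1) = i).card
      = (univ.filter fun x : Fin t → F => hammingNorm x + (if p' x then 0 else 1) = i).card := by
  have hB : (univ.filter fun x : Fin t → F => p x ∧ hammingNorm x + 1 = i).card
      = (univ.filter fun x : Fin t → F => p' x ∧ hammingNorm x + 1 = i).card := by
    cases i with
    | zero => simp
    | succ j =>
      have e1 : (univ.filter fun x : Fin t → F => p x ∧ hammingNorm x + 1 = j + 1)
          = univ.filter fun x : Fin t → F => p x ∧ hammingNorm x = j := by
        apply Finset.filter_congr; intro x _; simp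
      have e2 : (univ.filter fun x : Fin t → F => p' x ∧ hammingNorm x + 1 = j + 1)
          = univ.filter fun x : Fin t → F => p' x ∧ hammingNorm x = j := by
        apply Finset.filter_congr; intro x _; simp
      rw [e1, e2]; exact h j
  have h1 := cnt_split p i
  have h2 := cnt_split p' i
  rw [h i] at h1
  omega


-- helper: subtype/filter conversions
lemma sum_mem_filter {t : ℕ} (S : Submodule F (Fin t → F)) (f : (Fin t → F) → ℝ) :
    ∑ x ∈ univ.filter (fun x => x ∈ S), f x = ∑ c : S, f (c : Fin t → F) :=
  Finset.sum_subtype (p := fun x => x ∈ S) (univ.filter fun x => x ∈ S) (by simp) f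

lemma count_mem_filter {t : ℕ} (S : Submodule F (Fin t → F)) (j : ℕ) :
    (univ.filter fun x : Fin t → F => x ∈ S ∧ hammingNorm x = j).card = weightCount S j := by
  rw [weightCount, Finset.card_filter, Finset.card_filter,
    ← Finset.sum_subtype (p := fun x => x ∈ S) (univ.filter fun x => x ∈ S) (by simp)
      (fun x => if hammingNorm x = j then (1:ℕ) else 0),
    Finset.sum_filter]
  exact Finset.sum_congr rfl fun x _ => by
    by_cases h1 : x ∈ S <;> by_cases h2 : hammingNorm x = j <;> simp [h1, h2]

lemma main_ind {z : ℝ} (hz0 : 0 < z) (hz1 : z < 1) :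
    ∀ t m : ℕ, ∀ D : Submodule F (Fin m → F), Module.finrank F D = t →
      (∀ c ∈ D, c ≠ 0 → 2 ≤ hammingNorm c) →
      weightEnum D z ≤ KB F z t ∧
        (weightEnum D z = KB F z t → ∀ i, weightCount D i = eCnt F t i) := by
  intro t
  induction t using Nat.strong_induction_on with
  | _ t ih =>
  intro m D hdim hmin
  match t, hdim with
  | 0, hdim =>
    have hsub : Subsingleton D := Module.finrank_zero_iff.mp hdim
    have hval : ∀ c : D, (c : Fin m → F) = 0 := by
      intro c
      have : c = (0 : D) := Subsingleton.elim _ _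
      rw [this]; rfl
    have hcard : Fintype.card D = 1 := Fintype.card_eq_one_iff.mpr
      ⟨0, fun y => Subsingleton.elim _ _⟩
    have hwe : weightEnum D z = 1 := by
      rw [weightEnum]
      have : ∀ c : D, z ^ hammingNorm (c : Fin m → F) = 1 := by
        intro c; rw [hval c]
        simp [hammingNorm]
      rw [Finset.sum_congr rfl fun c _ => this c, Finset.sum_const, Finset.card_univ, hcard]
      simp
    constructor
    · rw [hwe, KB_zero]
    · intro _ i
      have hwc : weightCount D i = if i = 0 then 1 else 0 := by
        rw [weightCount]
        by_cases hi : i = 0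
        · subst hi
          rw [if_pos rfl, Finset.filter_true_of_mem, Finset.card_univ, hcard]
          intro c _
          rw [hval c]; simp [hammingNorm]
        · rw [if_neg hi, Finset.card_eq_zero.mpr, ]
          rw [Finset.filter_false_of_mem]
          intro c _
          rw [hval c]; simpa [hammingNorm] using (fun h => hi h.symm)
      have hec : eCnt F 0 i = if i = 0 then 1 else 0 := by
        rw [eCnt]
        by_cases hi : i = 0
        · subst hi
          rw [if_pos rfl, Finset.filter_true_of_mem, Finset.card_univ]
          · simp
          · intro x _
            simp [hammingNorm, Finset.sum_empty]
        · rw [if_neg hi]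
          rw [Finset.card_eq_zero.mpr]
          rw [Finset.filter_false_of_mem]
          intro x _
          simp [hammingNorm, Finset.sum_empty]
          omega
      rw [hwc, hec]
  | (s + 1), hdim =>
    obtain ⟨ι, hιinj, hsep, hsupp⟩ := exists_info_set (s+1) m D hdim
    set π : (Fin m → F) →ₗ[F] (Fin (s+1) → F) := LinearMap.funLeft F F ι with hπdef
    have hπapp : ∀ c : Fin m → F, π c = c ∘ ι := fun c => rfl
    set πD : D →ₗ[F] (Fin (s+1) → F) := π.comp D.subtype with hπDdef
    have hπDapp : ∀ c : D, πD c = (c : Fin m → F) ∘ ι := fun c => rfl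
    have hπDinj : Function.Injective πD := by
      rw [← LinearMap.ker_eq_bot, LinearMap.ker_eq_bot']
      intro c hc
      have : (c : Fin m → F) = 0 := by
        apply hsep c c.2
        intro j
        have := congrFun (hπDapp c ▸ hc) j
        simpa using this
      exact Subtype.ext this
    have hfrtarget : Module.finrank F D = Module.finrank F (Fin (s+1) → F) := by
      rw [hdim, Module.finrank_pi F]
      simp
    set e : D ≃ₗ[F] (Fin (s+1) → F) := πD.linearEquivOfInjective hπDinj hfrtarget with hedef
    have heapp : ∀ c : D, e c = πD c := fun c =>
      πD.linearEquivOfInjective_apply hπDinj hfrtarget c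
    set D' : Submodule F (Fin (s+1) → F) := Submodule.map π (D ⊓ Zsub (s+1) m ι F) with hD'def
    have hminD' : ∀ x ∈ D', x ≠ 0 → 2 ≤ hammingNorm x := by
      intro x hx hxne
      obtain ⟨c, ⟨hcD, hcZ⟩, rfl⟩ := hx
      have hcne : c ≠ 0 := by
        intro h; apply hxne; rw [h]; exact map_zero π
      rw [hπapp, norm_comp_eq hιinj c hcZ]
      exact hmin c hcD hcne
    set t' := Module.finrank F D' with ht'def
    have ht'le : t' ≤ s := by
      by_contra h
      push_neg at h
      have h1 : t' ≤ Module.finrank F ↥(D ⊓ Zsub (s+1) m ι F) := Submodule.finrank_map_le π _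
      have h2 : Module.finrank F ↥(D ⊓ Zsub (s+1) m ι F) ≤ Module.finrank F ↥D :=
        Submodule.finrank_mono inf_le_left
      have ht'eq : t' = s + 1 := by omega
      have htop : D' = ⊤ := by
        apply Submodule.eq_top_of_finrank_eq
        rw [← ht'def, ht'eq, Module.finrank_pi F]
        simp
      have hmem : (Pi.single 0 1 : Fin (s+1) → F) ∈ D' := by rw [htop]; trivial
      have hne : (Pi.single 0 1 : Fin (s+1) → F) ≠ 0 := by
        intro h
        have := congrFun h 0
        simp at this
      have h2le := hminD' _ hmem hne
      have : hammingNorm (Pi.single 0 1 : Fin (s+1) → F) = 1 := by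
        rw [hammingNorm]
        have : (univ.filter fun i : Fin (s+1) => (Pi.single 0 1 : Fin (s+1) → F) i ≠ 0)
            = {0} := by
          ext i
          simp only [Finset.mem_filter, Finset.mem_univ, true_and, Finset.mem_singleton]
          constructor
          · intro hne'
            by_contra hne''
            apply hne'
            rw [Pi.single_apply, if_neg (Ne.symm hne'' ∘ Eq.symm)]
          · intro h; subst h; simp
        rw [this, Finset.card_singleton]
      omega
    have hIH := ih t' (by omega) (s+1) D' rfl hminD'
    -- per-element inequality
    have key : ∀ c : D, hammingNorm (πD c)
        + (if (πD c) ∈ D' then 0 else 1) ≤ hammingNorm (c : Fin m → F) := by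
      intro c
      by_cases hmem : πD c ∈ D'
      · rw [if_pos hmem, Nat.add_zero, hπDapp]
        exact norm_comp_le hιinj _
      · rw [if_neg hmem]
        have : ∃ i, i ∉ Set.range ι ∧ (c : Fin m → F) i ≠ 0 := by
          by_contra h
          push_neg at h
          apply hmem
          exact ⟨c, ⟨c.2, fun i hi => h i hi⟩, rfl⟩
        obtain ⟨i, hi, hci⟩ := this
        rw [hπDapp]
        exact norm_comp_add_one_le hιinj _ hi hci
    -- sum chain
    have hterm : ∀ c : D, z ^ hammingNorm (c : Fin m → F)
        ≤ z ^ (hammingNorm (πD c) + if (πD c) ∈ D' then 0 else 1) :=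
      fun c => pow_le_pow_of_le_one (le_of_lt hz0) (le_of_lt hz1) (key c)
    have hchain1 : weightEnum D z
        ≤ ∑ c : D, z ^ (hammingNorm (πD c) + if (πD c) ∈ D' then 0 else 1) := by
      rw [weightEnum]
      exact Finset.sum_le_sum fun c _ => hterm c
    have hchain2 : ∑ c : D, z ^ (hammingNorm (πD c) + if (πD c) ∈ D' then 0 else 1)
        = ∑ x : Fin (s+1) → F, z ^ (hammingNorm x + if x ∈ D' then 0 else 1) := by
      rw [← Equiv.sum_comp e.toEquiv
        (fun x => z ^ (hammingNorm x + if x ∈ D' then 0 else 1))]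
      exact Finset.sum_congr rfl fun c _ => by rw [LinearEquiv.coe_toEquiv, heapp]
    have hchain3 : ∑ x : Fin (s+1) → F, z ^ (hammingNorm x + if x ∈ D' then 0 else 1)
        = z * (1 + ((Fintype.card F : ℝ) - 1) * z) ^ (s+1) + (1 - z) * weightEnum D' z := by
      rw [sum_pow_ind z (fun x => x ∈ D'), sum_pow_norm, sum_mem_filter D']
      rfl
    have h1z : (0:ℝ) < 1 - z := by linarith
    have hle : weightEnum D z ≤ KB F z (s+1) := by
      calc weightEnum D z
          ≤ z * (1 + ((Fintype.card F : ℝ) - 1) * z) ^ (s+1) + (1 - z) * weightEnum D' z := by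
            rw [← hchain3, ← hchain2]; exact hchain1
        _ ≤ z * (1 + ((Fintype.card F : ℝ) - 1) * z) ^ (s+1) + (1 - z) * KB F z s := by
            have := hIH.1
            have h2 : weightEnum D' z ≤ KB F z s := le_trans this (KB_le hz0 hz1 ht'le)
            nlinarith
        _ = KB F z (s+1) := KB_step z s
    refine ⟨hle, ?_⟩
    intro hEq i
    -- equality forces everything
    have hE1 : weightEnum D' z = KB F z s := by
      have hub := hIH.1
      have h2 : weightEnum D' z ≤ KB F z s := le_trans hub (KB_le hz0 hz1 ht'le)
      by_contra hne
      have hlt : weightEnum D' z < KB F z s := lt_of_le_of_ne h2 hne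
      have : weightEnum D z < KB F z (s+1) := by
        calc weightEnum D z
            ≤ z * (1 + ((Fintype.card F : ℝ) - 1) * z) ^ (s+1) + (1 - z) * weightEnum D' z := by
              rw [← hchain3, ← hchain2]; exact hchain1
          _ < z * (1 + ((Fintype.card F : ℝ) - 1) * z) ^ (s+1) + (1 - z) * KB F z s := by
              nlinarith
          _ = KB F z (s+1) := KB_step z s
      exact absurd hEq (ne_of_lt this)
    have ht's : t' = s := by
      by_contra hne
      have hlt : t' < s := by omega
      have : weightEnum D' z < KB F z s := lt_of_le_of_lt hIH.1 (KB_lt_of_lt hz0 hz1 hlt)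
      rw [hE1] at this
      exact lt_irrefl _ this
    have hcnt' : ∀ j, weightCount D' j = eCnt F s j := by
      have := hIH.2
      rw [ht's] at this
      exact this hE1
    -- termwise equality
    have hsumeq : weightEnum D z
        = ∑ c : D, z ^ (hammingNorm (πD c) + if (πD c) ∈ D' then 0 else 1) := by
      have hupper : ∑ c : D, z ^ (hammingNorm (πD c) + if (πD c) ∈ D' then 0 else 1)
          ≤ KB F z (s+1) := by
        rw [hchain2, hchain3, ← KB_step z s]
        have h2 : weightEnum D' z ≤ KB F z s := le_trans hIH.1 (KB_le hz0 hz1 ht'le)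
        nlinarith
      have := hchain1
      rw [hEq] at this ⊢
      linarith
    have htermeq : ∀ c : D, hammingNorm (c : Fin m → F)
        = hammingNorm (πD c) + if (πD c) ∈ D' then 0 else 1 := by
      intro c
      have hall := (Finset.sum_eq_sum_iff_of_le (fun c _ => hterm c)).mp (by
        rw [← weightEnum]; exact hsumeq) c (Finset.mem_univ c)
      have hzanti : StrictAnti (fun n : ℕ => z ^ n) := fun a b hab =>
        pow_lt_pow_right_of_lt_one₀ hz0 hz1 hab
      exact hzanti.injective hall
    -- counts
    have hcountD : weightCount D i
        = (univ.filter fun x : Fin (s+1) → F =>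
            hammingNorm x + (if x ∈ D' then 0 else 1) = i).card := by
      rw [weightCount]
      apply Finset.card_bij (fun (c : D) _ => e c)
      · intro c hc
        simp only [Finset.mem_filter, Finset.mem_univ, true_and] at *
        rw [heapp, ← htermeq c]
        exact hc
      · intro a ha b hb hab
        exact e.injective hab
      · intro x hx
        refine ⟨e.symm x, ?_, by simp⟩
        simp only [Finset.mem_filter, Finset.mem_univ, true_and] at *
        rw [htermeq (e.symm x)]
        have hex : e (e.symm x) = x := e.apply_symm_apply x
        rw [← heapp, hex]
        exact hx
    rw [hcountD]
    have := cnt_transfer (fun x : Fin (s+1) → F => x ∈ D')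
      (fun x : Fin (s+1) → F => (∑ j, x j) = 0) ?_ i
    · rw [this]; rfl
    · intro j
      rw [count_mem_filter D' j, szero_cnt s j]
      exact hcnt' j


lemma Emap_apply {n k : ℕ} (v : Fin k → F) (x : Fin k → F) (i : Fin n) :
    Emap F n k v x i = if h : (i : ℕ) < k then x ⟨i, h⟩
      else if (i : ℕ) = k then ∑ j, x j * v j else 0 := rfl

lemma norm_Emap {n k : ℕ} (hkn : k + 1 ≤ n) (v : Fin k → F) (x : Fin k → F) :
    hammingNorm (Emap F n k v x)
      = hammingNorm x + (if (∑ j, x j * v j) = 0 then 0 else 1) := by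
  classical
  set f : Fin (k+1) → Fin n := Fin.castLE hkn with hfdef
  have hfinj : Function.Injective f := Fin.castLE_injective hkn
  rw [hammingNorm_eq_sum (Emap F n k v x), hammingNorm_eq_sum x]
  rw [← Finset.sum_subset (Finset.subset_univ (Finset.image f univ))]
  · rw [Finset.sum_image (fun a _ b _ h => hfinj h)]
    rw [Fin.sum_univ_castSucc
      (fun j : Fin (k+1) => if Emap F n k v x (f j) = 0 then 0 else 1)]
    congr 1
    · refine Finset.sum_congr rfl fun j _ => ?_
      have hj : ((f (Fin.castSucc j) : Fin n) : ℕ) < k := by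
        simpa [hfdef] using j.2
      rw [Emap_apply, dif_pos hj]
      have hje : (⟨((f (Fin.castSucc j) : Fin n) : ℕ), hj⟩ : Fin k) = j := by
        apply Fin.ext
        simp [hfdef]
      rw [hje]
    · have hk : ¬ ((f (Fin.last k) : Fin n) : ℕ) < k := by simp [hfdef]
      have hk2 : ((f (Fin.last k) : Fin n) : ℕ) = k := by simp [hfdef]
      rw [Emap_apply, dif_neg hk, if_pos hk2]
  · intro i _ hi
    have hik : ¬ ((i : ℕ) < k + 1) := by
      intro h
      apply hi
      rw [Finset.mem_image]
      exact ⟨⟨(i : ℕ), h⟩, Finset.mem_univ _, by apply Fin.ext; simp [hfdef]⟩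
    have h1 : ¬ ((i : ℕ) < k) := by omega
    have h2 : ¬ ((i : ℕ) = k) := by omega
    rw [Emap_apply, dif_neg h1, if_neg h2, if_pos rfl]

lemma Emap_inj {n k : ℕ} (hkn : k + 1 ≤ n) (v : Fin k → F) :
    Function.Injective (Emap F n k v) := by
  intro a b hab
  funext j
  have hj : ((j : ℕ) : ℕ) < k := j.2
  have h1 := congrFun hab ⟨(j : ℕ), by omega⟩
  rw [Emap_apply, Emap_apply, dif_pos (by simpa using hj), dif_pos (by simpa using hj)] at h1
  simpa [Fin.eta] using h1

lemma count_Ecode {n k : ℕ} (hkn : k + 1 ≤ n) (v : Fin k → F) (hv : ∀ j, v j ≠ 0) (i : ℕ) :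
    weightCount (Ecode F n k v) i = eCnt F k i := by
  have step1 : weightCount (Ecode F n k v) i
      = (univ.filter fun x : Fin k → F =>
          hammingNorm x + (if (∑ j, x j * v j) = 0 then 0 else 1) = i).card := by
    rw [weightCount]
    symm
    apply Finset.card_bij
      (fun (x : Fin k → F) _ => (⟨Emap F n k v x, ⟨x, rfl⟩⟩ : Ecode F n k v))
    · intro x hx
      rw [Finset.mem_filter] at *
      refine ⟨Finset.mem_univ _, ?_⟩
      rw [show ((⟨Emap F n k v x, ⟨x, rfl⟩⟩ : Ecode F n k v) : Fin n → F) = Emap F n k v x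
        from rfl, norm_Emap hkn]
      exact hx.2
    · intro a ha b hb hab
      exact Emap_inj hkn v (by simpa using congrArg Subtype.val hab)
    · intro c hc
      rw [Finset.mem_filter] at hc
      obtain ⟨x, hx⟩ := c.2
      refine ⟨x, ?_, by apply Subtype.ext; simpa using hx⟩
      rw [Finset.mem_filter]
      refine ⟨Finset.mem_univ _, ?_⟩
      rw [← norm_Emap hkn, hx]
      exact hc.2
  rw [step1, eCnt]
  apply Finset.card_bij (fun (x : Fin k → F) _ => fun j => x j * v j)
  · intro x hx
    rw [Finset.mem_filter] at *
    refine ⟨Finset.mem_univ _, ?_⟩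
    have hn : hammingNorm (fun j => x j * v j) = hammingNorm x := by
      rw [hammingNorm, hammingNorm]
      congr 1
      ext j
      simp [mul_eq_zero, hv j]
    rw [hn]
    exact hx.2
  · intro a ha b hb hab
    funext j
    have := congrFun hab j
    exact mul_right_cancel₀ (hv j) this
  · intro y hy
    rw [Finset.mem_filter] at hy
    refine ⟨fun j => y j * (v j)⁻¹, ?_, ?_⟩
    · rw [Finset.mem_filter]
      refine ⟨Finset.mem_univ _, ?_⟩
      have he : (fun j => y j * (v j)⁻¹ * v j) = y := by
        funext j
        rw [mul_assoc, inv_mul_cancel₀ (hv j), mul_one]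
      rw [show (∑ j, y j * (v j)⁻¹ * v j) = ∑ j, y j from by rw [he]]
      have hn : hammingNorm (fun j => y j * (v j)⁻¹) = hammingNorm y := by
        rw [hammingNorm, hammingNorm]
        congr 1
        ext j
        simp [mul_eq_zero, hv j, inv_eq_zero]
      rw [hn]
      exact hy.2
    · funext j
      rw [mul_assoc, inv_mul_cancel₀ (hv j), mul_one]


end Aux

/-- If `C` is an `[n,k;q]` code of minimum distance at least 2 whose weight
distribution function attains the bound `(1/q)[(1+(q-1)z)^{k+1}+(q-1)(1-z)^{k+1}]`
at some `z₀ ∈ (0,1)`, then `C` has the same weight distribution as `E_{n,k,v}`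
for any `v` of full support. -/
theorem weightCount_eq_Ecode_of_extremal {F : Type*} [Field F] [Fintype F] {n k q : ℕ}
    (hq : Fintype.card F = q) (hk : 1 ≤ k) (hkn : k + 1 ≤ n)
    (C : Submodule F (Fin n → F)) (hdim : Module.finrank F C = k)
    (hmin : ∀ c ∈ C, c ≠ 0 → 2 ≤ hammingNorm c)
    (z₀ : ℝ) (hz₀ : 0 < z₀) (hz₁ : z₀ < 1)
    (heq : weightEnum C z₀ =
      (1 / (q : ℝ)) * ((1 + ((q : ℝ) - 1) * z₀) ^ (k + 1)
        + ((q : ℝ) - 1) * (1 - z₀) ^ (k + 1)))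
    (v : Fin k → F) (hv : ∀ j, v j ≠ 0) :
    ∀ i : ℕ, i ≤ n → weightCount C i = weightCount (Ecode F n k v) i := by
  subst hq
  have hKB : weightEnum C z₀ = KB F z₀ k := by rw [KB]; exact heq
  have hmain := main_ind hz₀ hz₁ k n C hdim hmin
  intro i _
  rw [hmain.2 hKB i, count_Ecode hkn v hv i]
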